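/- Let P be a Borel probability measure on ℝ^d such that for every x ∈ supp(P), liminf_{r→0} P(B(x,r))/r^d > 0. Let K : ℝ^d → ℝ be a nonnegative function with K(0) > 0 that is continuous at 0, and let {h_n}_{n∈ℕ} be a sequence with h_n > 0 and h_n → 0. Then for every x ∈ supp(P), liminf_{n→∞} p_{h_n}(x) > 0. -/

import Mathlib

open MeasureTheory Metric Filter
open scoped ENNReal

/-- The support of a measure `P`: points all of whose neighborhoods have positive mass. -/
def msupp {d : ℕ} (P : Measure (EuclideanSpace ℝ (Fin d))) : Set (EuclideanSpace ℝ (Fin d)) :=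
  {x | ∀ r > 0, 0 < P (ball x r)}

/-- The average kernel density estimator `p_h(x) = ∫ h^{-d} K((x-y)/h) dP(y)`
(for a nonnegative kernel, as a Lebesgue integral). -/
noncomputable def avgKDE {d : ℕ} (P : Measure (EuclideanSpace ℝ (Fin d)))
    (K : EuclideanSpace ℝ (Fin d) → ℝ) (h : ℝ) (x : EuclideanSpace ℝ (Fin d)) : ℝ≥0∞ :=
  ∫⁻ y, ENNReal.ofReal ((1 / h ^ d) * K (h⁻¹ • (x - y))) ∂P

theorem stmt0 {d : ℕ} (P : Measure (EuclideanSpace ℝ (Fin d))) [IsProbabilityMeasure P]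
    (hP : ∀ x ∈ msupp P,
      0 < liminf (fun r : ℝ => P (ball x r) / ENNReal.ofReal (r ^ d))
        (nhdsWithin (0 : ℝ) (Set.Ioi 0)))
    (K : EuclideanSpace ℝ (Fin d) → ℝ) (hK0 : ∀ y, 0 ≤ K y) (hKpos : 0 < K 0)
    (hKcont : ContinuousAt K 0)
    (h : ℕ → ℝ) (hhpos : ∀ n, 0 < h n) (hhlim : Tendsto h atTop (nhds 0)) :
    ∀ x ∈ msupp P, 0 < liminf (fun n => avgKDE P K (h n) x) atTop := by
  intro x hx
  obtain ⟨ε, hε, hKε⟩ : ∃ ε > 0, ∀ u : EuclideanSpace ℝ (Fin d), dist u 0 < ε → K 0 / 2 ≤ K u := by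
    obtain ⟨δ, hδ, hδ'⟩ := Metric.continuousAt_iff.mp hKcont (K 0 / 2) (by positivity)
    refine ⟨δ, hδ, fun u hu => ?_⟩
    have := hδ' hu
    rw [Real.dist_eq] at this
    linarith [(abs_lt.mp this).1]
  set f : ℝ → ℝ≥0∞ := fun r => P (ball x r) / ENNReal.ofReal (r ^ d) with hf
  have hc : 0 < liminf f (nhdsWithin 0 (Set.Ioi 0)) := hP x hx
  set c := liminf f (nhdsWithin 0 (Set.Ioi 0)) with hc_def
  set a : ℝ≥0∞ := min (c / 2) 1 with ha_def
  have ha0 : 0 < a := lt_min (ENNReal.half_pos hc.ne') one_pos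
  have hac : a < c := by
    rcases eq_or_ne c ∞ with hC | hC
    · rw [hC]
      exact lt_of_le_of_lt (min_le_right _ _) (by simp)
    · exact lt_of_le_of_lt (min_le_left _ _) (ENNReal.half_lt_self hc.ne' hC)
  have hev : ∀ᶠ r in nhdsWithin (0:ℝ) (Set.Ioi 0), a < f r :=
    eventually_lt_of_lt_liminf hac
  have htend : Tendsto (fun n => ε * h n) atTop (nhdsWithin (0:ℝ) (Set.Ioi 0)) := by
    apply tendsto_nhdsWithin_of_tendsto_nhds_of_eventually_within
    · simpa using hhlim.const_mul ε
    · exact Eventually.of_forall fun n => Set.mem_Ioi.mpr (mul_pos hε (hhpos n))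
  have hevn : ∀ᶠ n in atTop, a < f (ε * h n) := htend.eventually hev
  set δ : ℝ≥0∞ := ENNReal.ofReal (K 0 / 2 * ε ^ d) * a with hδ_def
  have hδ0 : 0 < δ :=
    ENNReal.mul_pos (ENNReal.ofReal_pos.mpr (by positivity)).ne' ha0.ne'
  have key : ∀ n, a < f (ε * h n) → δ ≤ avgKDE P K (h n) x := by
    intro n hn
    have hhn := hhpos n
    have e1 : ENNReal.ofReal (K 0 / 2 * ε ^ d) / ENNReal.ofReal ((ε * h n) ^ d)
        = ENNReal.ofReal (1 / (h n) ^ d * (K 0 / 2)) := by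
      rw [← ENNReal.ofReal_div_of_pos (by positivity)]
      congr 1
      field_simp
      ring
    calc δ ≤ ENNReal.ofReal (K 0 / 2 * ε ^ d) * f (ε * h n) :=
          mul_le_mul_right hn.le _
      _ = ENNReal.ofReal (K 0 / 2 * ε ^ d) / ENNReal.ofReal ((ε * h n) ^ d)
            * P (ball x (ε * h n)) := by
          simp only [hf]
          rw [← mul_div_assoc, mul_comm (ENNReal.ofReal _) (P _), mul_div_assoc,
            mul_comm]
      _ = ENNReal.ofReal (1 / (h n) ^ d * (K 0 / 2)) * P (ball x (ε * h n)) := by rw [e1]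
      _ = ∫⁻ _ in ball x (ε * h n), ENNReal.ofReal (1 / (h n) ^ d * (K 0 / 2)) ∂P := by
          rw [setLIntegral_const]
      _ ≤ ∫⁻ y in ball x (ε * h n),
            ENNReal.ofReal (1 / (h n) ^ d * K ((h n)⁻¹ • (x - y))) ∂P := by
          refine lintegral_mono_ae (ae_restrict_of_forall_mem measurableSet_ball fun y hy => ?_)
          apply ENNReal.ofReal_le_ofReal
          refine mul_le_mul_of_nonneg_left (hKε _ ?_) (by positivity)
          rw [dist_zero_right, norm_smul, norm_inv, Real.norm_eq_abs, abs_of_pos hhn,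
            ← dist_eq_norm]
          have hyb : dist x y < ε * h n := by rw [dist_comm]; exact mem_ball.mp hy
          rw [inv_mul_lt_iff₀ hhn, mul_comm ε (h n)] at *
          linarith
      _ ≤ avgKDE P K (h n) x := setLIntegral_le_lintegral _ _
  have hevδ : ∀ᶠ n in atTop, δ ≤ avgKDE P K (h n) x := hevn.mono key
  exact lt_of_lt_of_le hδ0 (le_liminf_of_le (by isBoundedDefault) hevδ)
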